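/- arXiv:2307.06866 — 2 statements merged into one kernel-verified Lean document; each statement's English description precedes it below -/
import Mathlib

section
/- The function p₀(x) = x^{β-2}(1-x)^{-β-2} exp(-c/(1-x)), with β = 2(1-R₀⁻¹)/(σ²/λ̄) and c = 2R₀⁻¹/(σ²/λ̄), is integrable on (0,1) if and only if β > 1, i.e., if and only if σ²/λ̄ < 2(1 - 1/R₀). -/
open MeasureTheory

lemma sis_exp_bound (c beta : ℝ) (hc : 0 < c) :
    ∃ M : ℝ, 0 < M ∧ ∀ t : ℝ, 0 < t → t ≤ 1 →
      t ^ (-beta - 2) * Real.exp (-c / t) ≤ M := by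
  obtain ⟨n, hn⟩ : ∃ n : ℕ, beta + 2 ≤ n := ⟨⌈beta + 2⌉₊, Nat.le_ceil _⟩
  refine ⟨n.factorial / c ^ n, by positivity, fun t ht ht1 => ?_⟩
  have h2 : (c / t) ^ n / n.factorial ≤ Real.exp (c / t) :=
    Real.pow_div_factorial_le_exp (c / t) (by positivity) n
  have hfac : (0:ℝ) < n.factorial := by positivity
  have h1 : Real.exp (-c / t) ≤ n.factorial * t ^ n / c ^ n := by
    have hpos : (0:ℝ) < (c / t) ^ n / n.factorial := by positivity
    have := inv_anti₀ hpos h2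
    rw [show -c / t = -(c / t) by ring, Real.exp_neg]
    calc (Real.exp (c / t))⁻¹ ≤ ((c / t) ^ n / n.factorial)⁻¹ := this
      _ = n.factorial * t ^ n / c ^ n := by
          rw [div_pow]
          field_simp
  calc t ^ (-beta - 2) * Real.exp (-c / t)
      ≤ t ^ (-beta - 2) * (n.factorial * t ^ n / c ^ n) :=
        mul_le_mul_of_nonneg_left h1 (Real.rpow_nonneg ht.le _)
    _ = (n.factorial / c ^ n) * (t ^ (-beta - 2) * t ^ (n : ℝ)) := by
        rw [Real.rpow_natCast]; ring
    _ = (n.factorial / c ^ n) * t ^ ((n : ℝ) - beta - 2) := by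
        rw [← Real.rpow_add ht]; ring_nf
    _ ≤ (n.factorial / c ^ n) * 1 := by
        refine mul_le_mul_of_nonneg_left ?_ (by positivity)
        exact Real.rpow_le_one ht.le ht1 (by linarith)
    _ = n.factorial / c ^ n := mul_one _

/-- Integrability of the Itô stationary PDF of the stochastic SIS model on `(0,1)`. -/
theorem ito_stationary_pdf_integrable_iff (R0 lamBar sigma : ℝ)
    (hR0 : 1 < R0) (hlam : 0 < lamBar) (hsigma : 0 < sigma)
    (s beta c : ℝ) (hs : s = sigma^2 / lamBar) (hbeta : beta = 2 * (1 - 1/R0) / s)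
    (hc : c = (2 / R0) / s) :
    (IntegrableOn
        (fun x : ℝ => x ^ (beta - 2) * (1 - x) ^ (-beta - 2) * Real.exp (-c / (1 - x)))
        (Set.Ioo 0 1) ↔ 1 < beta) ∧
    (1 < beta ↔ sigma^2 / lamBar < 2 * (1 - 1/R0)) := by
  have hR0' : (0:ℝ) < R0 := by linarith
  have hs' : 0 < s := by rw [hs]; positivity
  have hc' : 0 < c := by rw [hc]; exact div_pos (by positivity) hs'
  set f : ℝ → ℝ := fun x : ℝ =>
    x ^ (beta - 2) * (1 - x) ^ (-beta - 2) * Real.exp (-c / (1 - x)) with hf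
  have hfnonneg : ∀ x ∈ Set.Ioo (0:ℝ) 1, 0 ≤ f x := by
    intro x hx
    have hx0 : (0:ℝ) < x := hx.1
    have hx1 : (0:ℝ) < 1 - x := by linarith [hx.2]
    have := Real.rpow_nonneg hx0.le (beta - 2)
    have := Real.rpow_nonneg hx1.le (-beta - 2)
    positivity
  have hcont : ∀ a b : ℝ, 0 ≤ a → b ≤ 1 → ContinuousOn f (Set.Ioo a b) := by
    intro a b ha hb
    have hsub : Set.Ioo a b ⊆ Set.Ioo 0 1 := Set.Ioo_subset_Ioo ha hb
    have c1 : ContinuousOn (fun x : ℝ => x ^ (beta - 2)) (Set.Ioo a b) :=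
      continuousOn_id.rpow_const fun x hx => Or.inl (hsub hx).1.ne'
    have c2 : ContinuousOn (fun x : ℝ => (1 - x) ^ (-beta - 2)) (Set.Ioo a b) :=
      (continuousOn_const.sub continuousOn_id).rpow_const
        fun x hx => Or.inl (by have := (hsub hx).2; intro h; simp only [Pi.sub_apply, id_eq] at h; linarith)
    have c3 : ContinuousOn (fun x : ℝ => Real.exp (-c / (1 - x))) (Set.Ioo a b) := by
      refine Real.continuous_exp.comp_continuousOn ?_
      refine ContinuousOn.div continuousOn_const
        (continuousOn_const.sub continuousOn_id) ?_
      intro x hx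
      have := (hsub hx).2
      intro h; linarith
    exact (c1.mul c2).mul c3
  constructor
  · constructor
    · -- integrable → 1 < beta
      intro hint
      by_contra hb
      push_neg at hb
      have hint2 : IntegrableOn f (Set.Ioo 0 (1/2)) :=
        hint.mono_set (Set.Ioo_subset_Ioo le_rfl (by norm_num))
      set K : ℝ := Real.exp (-(2*c)) * min ((1/2 : ℝ) ^ (-beta - 2)) 1 with hK
      have hKpos : 0 < K := by
        refine mul_pos (Real.exp_pos _) (lt_min ?_ one_pos)
        exact Real.rpow_pos_of_pos (by norm_num) _
      have hbound : ∀ x ∈ Set.Ioo (0:ℝ) (1/2), K * x ^ (beta - 2) ≤ f x := by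
        intro x hx
        have hx0 : (0:ℝ) < x := hx.1
        have hx1 : (1/2 : ℝ) ≤ 1 - x := by linarith [hx.2]
        have hx1' : (0:ℝ) < 1 - x := by linarith
        have hb1 : min ((1/2 : ℝ) ^ (-beta - 2)) 1 ≤ (1 - x) ^ (-beta - 2) := by
          rcases le_or_gt 0 (-beta - 2) with h | h
          · exact le_trans (min_le_left _ _) (Real.rpow_le_rpow (by norm_num) hx1 h)
          · exact le_trans (min_le_right _ _)
              (Real.one_le_rpow_of_pos_of_le_one_of_nonpos hx1' (by linarith) h.le)
        have hb2 : Real.exp (-(2*c)) ≤ Real.exp (-c / (1 - x)) := by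
          apply Real.exp_le_exp.mpr
          rw [neg_div, neg_le_neg_iff]
          calc c / (1 - x) ≤ c / (1/2) := by
                apply div_le_div_of_nonneg_left hc'.le (by norm_num) hx1
            _ = 2 * c := by ring
        have hmul : min ((1/2 : ℝ) ^ (-beta - 2)) 1 * Real.exp (-(2*c)) ≤
            (1 - x) ^ (-beta - 2) * Real.exp (-c / (1 - x)) :=
          mul_le_mul hb1 hb2 (Real.exp_pos _).le (Real.rpow_nonneg hx1'.le _)
        calc K * x ^ (beta - 2)
            = x ^ (beta - 2) * (min ((1/2 : ℝ) ^ (-beta - 2)) 1 * Real.exp (-(2*c))) := by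
              rw [hK]; ring
          _ ≤ x ^ (beta - 2) * ((1 - x) ^ (-beta - 2) * Real.exp (-c / (1 - x))) :=
              mul_le_mul_of_nonneg_left hmul (Real.rpow_nonneg hx0.le _)
          _ = f x := by rw [hf]; ring
      have hgmeas : AEStronglyMeasurable (fun x : ℝ => K * x ^ (beta - 2))
          (volume.restrict (Set.Ioo (0:ℝ) (1/2))) := by
        refine ContinuousOn.aestronglyMeasurable ?_ measurableSet_Ioo
        exact continuousOn_const.mul
          (continuousOn_id.rpow_const fun x hx => Or.inl hx.1.ne')
      have hgint : IntegrableOn (fun x : ℝ => K * x ^ (beta - 2)) (Set.Ioo 0 (1/2)) := by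
        refine hint2.mono' hgmeas ?_
        rw [ae_restrict_iff' measurableSet_Ioo]
        filter_upwards with x hx
        rw [Real.norm_eq_abs, abs_of_nonneg
          (mul_nonneg hKpos.le (Real.rpow_nonneg hx.1.le _))]
        exact hbound x hx
      have hrint : IntegrableOn (fun x : ℝ => x ^ (beta - 2)) (Set.Ioo 0 (1/2)) := by
        have := hgint.const_mul K⁻¹
        simpa [IntegrableOn, ← mul_assoc, inv_mul_cancel₀ hKpos.ne'] using this
      rw [intervalIntegral.integrableOn_Ioo_rpow_iff (by norm_num : (0:ℝ) < 1/2)] at hrint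
      linarith
    · -- 1 < beta → integrable
      intro hb
      obtain ⟨M, hM, hMbd⟩ := sis_exp_bound c beta hc'
      have piece1 : IntegrableOn f (Set.Ioo 0 (2/3)) := by
        set K1 : ℝ := max ((1/3 : ℝ) ^ (-beta - 2)) 1 with hK1
        have hgint : IntegrableOn (fun x : ℝ => K1 * x ^ (beta - 2)) (Set.Ioo 0 (2/3)) := by
          refine Integrable.const_mul ?_ K1
          have : IntegrableOn (fun x : ℝ => x ^ (beta - 2)) (Set.Ioo 0 (2/3)) := by
            rw [intervalIntegral.integrableOn_Ioo_rpow_iff (by norm_num : (0:ℝ) < 2/3)]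
            linarith
          exact this
        refine hgint.mono' ?_ ?_
        · exact (hcont 0 (2/3) le_rfl (by norm_num)).aestronglyMeasurable measurableSet_Ioo
        · rw [ae_restrict_iff' measurableSet_Ioo]
          filter_upwards with x hx
          have hx0 : (0:ℝ) < x := hx.1
          have hx1 : (1/3 : ℝ) ≤ 1 - x := by linarith [hx.2]
          have hx1' : (0:ℝ) < 1 - x := by linarith
          have hxI : x ∈ Set.Ioo (0:ℝ) 1 := ⟨hx0, by linarith [hx.2]⟩
          rw [Real.norm_eq_abs, abs_of_nonneg (hfnonneg x hxI)]
          have hb1 : (1 - x) ^ (-beta - 2) ≤ K1 := by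
            rcases le_or_gt 0 (-beta - 2) with h | h
            · exact le_trans (Real.rpow_le_one hx1'.le (by linarith [hx.1]) h)
                (le_max_right _ _)
            · exact le_trans (Real.rpow_le_rpow_of_nonpos (by norm_num) hx1 h.le)
                (le_max_left _ _)
          have hb2 : Real.exp (-c / (1 - x)) ≤ 1 := by
            rw [Real.exp_le_one_iff]
            rw [neg_div]
            simp only [Left.neg_nonpos_iff]
            positivity
          calc f x = x ^ (beta - 2) * ((1 - x) ^ (-beta - 2) * Real.exp (-c / (1 - x))) := by
                rw [hf]; ring
            _ ≤ x ^ (beta - 2) * (K1 * 1) := by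
                refine mul_le_mul_of_nonneg_left ?_ (Real.rpow_nonneg hx0.le _)
                exact mul_le_mul hb1 hb2 (Real.exp_pos _).le
                  (le_trans (Real.rpow_nonneg hx1'.le _) hb1)
            _ = K1 * x ^ (beta - 2) := by ring
      have piece2 : IntegrableOn f (Set.Ioo (1/2) 1) := by
        set K2 : ℝ := max ((1/2 : ℝ) ^ (beta - 2)) 1 with hK2
        have hK2pos : 0 < K2 := lt_of_lt_of_le one_pos (le_max_right _ _)
        refine ⟨(hcont (1/2) 1 (by norm_num) le_rfl).aestronglyMeasurable
          measurableSet_Ioo, ?_⟩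
        refine HasFiniteIntegral.restrict_of_bounded (C := K2 * M)
          (measure_Ioo_lt_top) ?_
        rw [ae_restrict_iff' measurableSet_Ioo]
        filter_upwards with x hx
        have hx0 : (0:ℝ) < x := by linarith [hx.1]
        have hx1' : (0:ℝ) < 1 - x := by linarith [hx.2]
        have hxI : x ∈ Set.Ioo (0:ℝ) 1 := ⟨hx0, hx.2⟩
        rw [Real.norm_eq_abs, abs_of_nonneg (hfnonneg x hxI)]
        have hb1 : x ^ (beta - 2) ≤ K2 := by
          rcases le_or_gt 0 (beta - 2) with h | h
          · exact le_trans (Real.rpow_le_one hx0.le hx.2.le h) (le_max_right _ _)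
          · exact le_trans (Real.rpow_le_rpow_of_nonpos (by norm_num) hx.1.le h.le)
              (le_max_left _ _)
        have hb2 : (1 - x) ^ (-beta - 2) * Real.exp (-c / (1 - x)) ≤ M :=
          hMbd (1 - x) hx1' (by linarith [hx.1])
        calc f x = x ^ (beta - 2) * ((1 - x) ^ (-beta - 2) * Real.exp (-c / (1 - x))) := by
              rw [hf]; ring
          _ ≤ K2 * M := by
              refine mul_le_mul hb1 hb2 ?_ hK2pos.le
              exact mul_nonneg (Real.rpow_nonneg hx1'.le _) (Real.exp_pos _).le
      refine (piece1.union piece2).mono_set ?_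
      intro x hx
      rcases lt_or_ge x (2/3) with h | h
      · exact Or.inl ⟨hx.1, h⟩
      · exact Or.inr ⟨by linarith, hx.2⟩
  · rw [hbeta, ← hs, one_lt_div hs']
end

section
/- The root x₊(s) = [3s - 1 + √((1+s)² - 8s/R₀)]/(4s) is nondecreasing in s (on the domain where the square root is real and x₊ ∈ (0,1)) if and only if R₀ ≥ 2. -/
lemma xp_hasDerivAt (R0 s : ℝ) (hR0 : R0 ≠ 0) (hs : 0 < s)
    (hD : 0 < (1+s)^2 - 8*s/R0) :
    HasDerivAt (fun t => (3*t - 1 + Real.sqrt ((1 + t)^2 - 8*t/R0)) / (4*t))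
      ((Real.sqrt ((1+s)^2 - 8*s/R0) - (1 + s - 4*s/R0)) /
        (4*s^2*Real.sqrt ((1+s)^2 - 8*s/R0))) s := by
  have hq : 0 < Real.sqrt ((1+s)^2 - 8*s/R0) := Real.sqrt_pos.2 hD
  set q := Real.sqrt ((1+s)^2 - 8*s/R0) with hqdef
  have hq2 : q^2 = (1+s)^2 - 8*s/R0 := Real.sq_sqrt hD.le
  have h1 : HasDerivAt (fun t : ℝ => (1+t)^2 - 8*t/R0) (2*(1+s) - 8/R0) s := by
    have := (((hasDerivAt_id s).const_add 1).pow 2).sub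
      (((hasDerivAt_id s).const_mul 8).div_const R0)
    refine this.congr_deriv ?_
    simp
  have h2 : HasDerivAt (fun t => Real.sqrt ((1+t)^2 - 8*t/R0))
      ((2*(1+s) - 8/R0)/(2*q)) s := h1.sqrt hD.ne'
  have h3 : HasDerivAt (fun t : ℝ => 3*t - 1 + Real.sqrt ((1+t)^2 - 8*t/R0))
      (3 + (2*(1+s) - 8/R0)/(2*q)) s := by
    have := (((hasDerivAt_id s).const_mul 3).sub_const 1).add h2
    refine this.congr_deriv ?_
    ring
  have h4 : HasDerivAt (fun t : ℝ => 4*t) 4 s := by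
    simpa using (hasDerivAt_id s).const_mul 4
  have h5 := h3.div h4 (by positivity)
  refine h5.congr_deriv ?_
  rw [← hqdef]
  field_simp
  ring_nf
  have hq2R : q^2 * R0 = (1+s)^2 * R0 - 8*s := by
    rw [hq2]; field_simp
  linear_combination (-2) * hq2R

set_option maxHeartbeats 1000000 in
/-- The nonzero mode `x₊(s)` of the Itô stationary PDF is nondecreasing in the noise
intensity `s` (on the admissible domain) if and only if `R₀ ≥ 2`. -/
theorem mode_nondecreasing_iff_R0_ge_two (R0 : ℝ) (hR0 : 1 < R0)
    (xp : ℝ → ℝ)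
    (hxp : xp = fun s => (3*s - 1 + Real.sqrt ((1 + s)^2 - 8*s/R0)) / (4*s)) :
    (∀ s : ℝ, 0 < s → 8*s/R0 ≤ (1 + s)^2 → xp s ∈ Set.Ioo (0:ℝ) 1 →
        0 ≤ deriv xp s) ↔ 2 ≤ R0 := by
  have hR0pos : (0:ℝ) < R0 := by linarith
  constructor
  · -- forward: contrapositive
    intro h
    by_contra hlt
    push_neg at hlt
    obtain ⟨s0, hs0def⟩ : ∃ s0 : ℝ, s0 = (R0 - 1)/(2*R0) := ⟨_, rfl⟩
    have hs0 : 0 < s0 := by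
      rw [hs0def]; apply div_pos (by linarith) (by linarith)
    have hkey : 2*R0*s0 = R0 - 1 := by
      rw [hs0def]; field_simp
    have hs0q : s0 < 1/4 := by
      rw [hs0def, div_lt_div_iff₀ (by positivity) (by norm_num)]
      linarith
    have hinv : 8*s0/R0 = 8*s0*(1-2*s0) := by
      rw [div_eq_iff hR0pos.ne']
      linear_combination (8*s0) * hkey
    have hDval : (1+s0)^2 - 8*s0/R0 = (1-3*s0)^2 + 8*s0^2 := by
      rw [hinv]; ring
    have hD0 : 0 < (1+s0)^2 - 8*s0/R0 := by rw [hDval]; positivity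
    have hEval : 1 + s0 - 4*s0/R0 = 1 - 3*s0 + 8*s0^2 := by
      have : 4*s0/R0 = 4*s0*(1-2*s0) := by
        rw [div_eq_iff hR0pos.ne']
        linear_combination (4*s0) * hkey
      rw [this]; ring
    have hE0 : 0 < 1 + s0 - 4*s0/R0 := by rw [hEval]; nlinarith [sq_nonneg s0]
    have h12 : (0:ℝ) < 1 - 2*s0 := by linarith
    have h14 : (0:ℝ) < 1 - 4*s0 := by linarith
    -- sqrt D < E
    have hDE : (1+s0)^2 - 8*s0/R0 < (1 + s0 - 4*s0/R0)^2 := by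
      rw [hDval, hEval]
      nlinarith [mul_pos (mul_pos hs0 hs0) (mul_pos h12 h14)]
    have hsqlt : Real.sqrt ((1+s0)^2 - 8*s0/R0) < 1 + s0 - 4*s0/R0 := by
      have := Real.sqrt_lt_sqrt hD0.le hDE
      rwa [Real.sqrt_sq hE0.le] at this
    -- membership
    have hsqgt : 1 - 3*s0 < Real.sqrt ((1+s0)^2 - 8*s0/R0) := by
      have h' : (1-3*s0)^2 < (1+s0)^2 - 8*s0/R0 := by rw [hDval]; nlinarith
      have := Real.sqrt_lt_sqrt (by positivity) h'
      rwa [Real.sqrt_sq (by nlinarith)] at this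
    have hsqlt1 : Real.sqrt ((1+s0)^2 - 8*s0/R0) < 1 + s0 := by
      have h' : (1+s0)^2 - 8*s0/R0 < (1+s0)^2 := by
        have : 0 < 8*s0/R0 := by positivity
        linarith
      have := Real.sqrt_lt_sqrt hD0.le h'
      rwa [Real.sqrt_sq (by positivity)] at this
    have hmem : xp s0 ∈ Set.Ioo (0:ℝ) 1 := by
      rw [hxp]
      constructor
      · apply div_pos _ (by positivity)
        linarith
      · rw [div_lt_one (by positivity)]
        linarith
    have hle : 8*s0/R0 ≤ (1 + s0)^2 := by linarith
    have h0le := h s0 hs0 hle hmem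
    have hder := (xp_hasDerivAt R0 s0 hR0pos.ne' hs0 hD0)
    rw [← hxp] at hder
    rw [hder.deriv] at h0le
    have hnum : Real.sqrt ((1+s0)^2 - 8*s0/R0) - (1 + s0 - 4*s0/R0) < 0 := by linarith
    have hden : 0 < 4*s0^2*Real.sqrt ((1+s0)^2 - 8*s0/R0) := by
      have := Real.sqrt_pos.2 hD0
      positivity
    nlinarith [div_neg_of_neg_of_pos hnum hden]
  · -- reverse
    intro h2R0 s hs hle hmem
    rcases lt_or_eq_of_le (sub_nonneg.2 hle) with hD | hD
    · -- D > 0 : use the derivative formula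
      have hder := (xp_hasDerivAt R0 s hR0pos.ne' hs hD)
      rw [← hxp] at hder
      rw [hder.deriv]
      have hE2 : (1 + s - 4*s/R0)^2 ≤ (1+s)^2 - 8*s/R0 := by
        have hid : ((1+s)^2 - 8*s/R0) - (1 + s - 4*s/R0)^2 = 8*s^2*(R0-2)/R0^2 := by
          field_simp
          ring
        have : 0 ≤ 8*s^2*(R0-2)/R0^2 := by
          apply div_nonneg _ (by positivity)
          nlinarith
        linarith
      have hEle : 1 + s - 4*s/R0 ≤ Real.sqrt ((1+s)^2 - 8*s/R0) :=
        calc 1 + s - 4*s/R0 ≤ |1 + s - 4*s/R0| := le_abs_self _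
          _ = Real.sqrt ((1 + s - 4*s/R0)^2) := (Real.sqrt_sq_eq_abs _).symm
          _ ≤ _ := Real.sqrt_le_sqrt hE2
      have hq : 0 < Real.sqrt ((1+s)^2 - 8*s/R0) := Real.sqrt_pos.2 hD
      apply div_nonneg (by linarith) (by positivity)
    · -- D = 0 : forces R0 = 2, s = 1; xp is not differentiable there
      have hs1 : s = 1 := by
        have h4 : 8*s/R0 ≤ 4*s := by
          rw [div_le_iff₀ hR0pos]
          nlinarith
        have : (1-s)^2 ≤ 0 := by nlinarith [hD]
        nlinarith [sq_nonneg (1-s)]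
      subst hs1
      have hR02 : R0 = 2 := by
        have : (0:ℝ) = (1+1)^2 - 8*1/R0 := hD
        field_simp at this
        linarith
      subst hR02
      by_cases hdiff : DifferentiableAt ℝ xp 1
      · exfalso
        have hd := hdiff.hasDerivAt
        have hx1 : xp 1 = 1/2 := by
          rw [hxp]
          norm_num
        -- left: xp = 1/2 on (0,1)
        have hevL : xp =ᶠ[nhdsWithin 1 (Set.Iio 1)] fun _ => (1/2:ℝ) := by
          filter_upwards [mem_nhdsWithin_of_mem_nhds (Ioi_mem_nhds one_pos),
            self_mem_nhdsWithin] with t ht ht'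
          have ht0 : (0:ℝ) < t := ht
          have ht1 : t < 1 := ht'
          rw [hxp]
          simp only
          have hq : (1+t)^2 - 8*t/2 = (1-t)^2 := by ring
          rw [hq, Real.sqrt_sq_eq_abs, abs_of_nonneg (by linarith : (0:ℝ) ≤ 1 - t)]
          rw [div_eq_iff (by positivity : (4*t) ≠ 0)]
          ring
        have hL : HasDerivWithinAt xp 0 (Set.Iio 1) 1 :=
          (hasDerivWithinAt_const 1 _ (1/2:ℝ)).congr_of_eventuallyEq hevL hx1
        -- right: xp = 1 - 1/(2t) on [1,∞)
        have hg0 : HasDerivAt (fun t : ℝ => 2*t) 2 1 := by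
          simpa using (hasDerivAt_id (1:ℝ)).const_mul 2
        have hg1 := (hg0.inv (by norm_num)).const_sub 1
        have hg : HasDerivAt (fun t : ℝ => 1 - 1/(2*t)) (1/2) 1 := by
          simp only [one_div]
          refine hg1.congr_deriv ?_
          norm_num
        have hevR : xp =ᶠ[nhdsWithin 1 (Set.Ici 1)] fun t => 1 - 1/(2*t) := by
          filter_upwards [self_mem_nhdsWithin] with t ht'
          have ht1 : (1:ℝ) ≤ t := ht'
          have ht0 : (0:ℝ) < t := by linarith
          rw [hxp]
          simp only
          have hq : (1+t)^2 - 8*t/2 = (1-t)^2 := by ring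
          rw [hq, Real.sqrt_sq_eq_abs, abs_of_nonpos (by linarith : (1:ℝ) - t ≤ 0)]
          rw [div_eq_iff (by positivity : (4*t) ≠ 0)]
          field_simp
          ring
        have hR : HasDerivWithinAt xp (1/2) (Set.Ici 1) 1 :=
          hg.hasDerivWithinAt.congr_of_eventuallyEq hevR (by rw [hx1]; norm_num)
        have e1 : derivWithin xp (Set.Iio 1) 1 = 0 :=
          hL.derivWithin (uniqueDiffWithinAt_Iio 1)
        have e2 : derivWithin xp (Set.Iio 1) 1 = deriv xp 1 :=
          (hd.hasDerivWithinAt.derivWithin (uniqueDiffWithinAt_Iio 1))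
        have e3 : derivWithin xp (Set.Ici 1) 1 = 1/2 :=
          hR.derivWithin ((uniqueDiffOn_Ici 1) 1 Set.self_mem_Ici)
        have e4 : derivWithin xp (Set.Ici 1) 1 = deriv xp 1 :=
          (hd.hasDerivWithinAt.derivWithin ((uniqueDiffOn_Ici 1) 1 Set.self_mem_Ici))
        rw [e1] at e2
        rw [e3] at e4
        rw [← e2] at e4
        norm_num at e4
      · rw [deriv_zero_of_not_differentiableAt hdiff]
end
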